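/- Let p be a prime, r ≥ 1, q = p^r with q ≡ 3 (mod 4), and d = (q+1)/4. Then the finite field F_q with q elements is a splitting field over F_p of the d-th Chebyshev polynomial φ_d ∈ F_p[X]; in particular φ_d splits completely into linear factors over F_q, and F_q is generated over F_p by the roots of φ_d. -/

import Mathlib

open Polynomial

private lemma dicksonNatDegreeLe {R : Type*} [CommRing R] (k : ℕ) (a : R) :
    ∀ n, (dickson k a n).natDegree ≤ n
  | 0 => by
    rw [dickson_zero]
    exact (natDegree_sub_le _ _).trans (by simp)
  | 1 => by rw [dickson_one]; exact natDegree_X_le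
  | n + 2 => by
    rw [dickson_add_two]
    refine (natDegree_sub_le _ _).trans (max_le ?_ ?_)
    · exact natDegree_mul_le.trans
        ((Nat.add_le_add natDegree_X_le (dicksonNatDegreeLe k a (n + 1))).trans (by omega))
    · exact natDegree_mul_le.trans
        (by simpa using (dicksonNatDegreeLe k a n).trans (by omega))

private lemma dicksonMonic {R : Type*} [CommRing R] [Nontrivial R] (k : ℕ) (a : R) :
    ∀ n, (dickson k a (n + 1)).Monic ∧ (dickson k a (n + 1)).natDegree = n + 1
  | 0 => ⟨monic_X, natDegree_X⟩
  | n + 1 => by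
    obtain ⟨h1, h2⟩ := dicksonMonic k a n
    have hm : (X * dickson k a (n + 1)).Monic := monic_X.mul h1
    have hdeg : (X * dickson k a (n + 1)).natDegree = n + 2 := by
      rw [monic_X.natDegree_mul h1, natDegree_X, h2]; omega
    have hlt' : (C a * dickson k a n).natDegree < (X * dickson k a (n + 1)).natDegree := by
      rw [hdeg]
      exact lt_of_le_of_lt (natDegree_mul_le.trans
        (by simpa using dicksonNatDegreeLe k a n)) (by omega)
    rw [dickson_add_two]
    exact ⟨hm.sub_of_left (degree_lt_degree hlt'),
      by rw [natDegree_sub_eq_left_of_natDegree_lt hlt', hdeg]⟩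


open IntermediateField

/-- let `p` be prime, `q = p^r ≡ 3 (mod 4)` and `d = (q+1)/4`.
Then `F_q = GaloisField p r` is a splitting field over `F_p = ZMod p` of the
`d`-th Chebyshev polynomial `φ_d`: it splits completely into linear factors
over `F_q`, and `F_q` is generated over `F_p` by its roots. -/
theorem stmt15 (p r q d : ℕ) [Fact p.Prime] (hr : 1 ≤ r) (hq : q = p ^ r)
    (hmod : q % 4 = 3) (hd : 4 * d = q + 1) :
    Polynomial.IsSplittingField (ZMod p) (GaloisField p r)
      (Polynomial.dickson 1 (1 : ZMod p) d) := by
  classical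
  have hp : p.Prime := Fact.out
  have hr0 : r ≠ 0 := by omega
  have hq3 : 3 ≤ q := by omega
  have hd1 : 1 ≤ d := by omega
  have hpq : p ∣ q := hq ▸ dvd_pow_self p hr0
  have hp2 : 2 ≤ p := hp.two_le
  have hpodd : p ≠ 2 := by
    rintro rfl
    obtain ⟨c, hc⟩ := hpq
    omega
  have hpq1 : ¬ p ∣ q + 1 := by
    intro h
    have h1 : p ∣ 1 := (Nat.dvd_add_right hpq).mp h
    have := Nat.le_of_dvd one_pos h1
    omega
  set F := ZMod p with hF
  set E := GaloisField p r with hE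
  set f : F[X] := dickson 1 (1 : F) d with hfdef
  have hfmon : f.Monic := by
    obtain ⟨h, -⟩ := dicksonMonic 1 (1 : F) (d - 1)
    rwa [Nat.sub_add_cancel hd1] at h
  have hf0 : f ≠ 0 := hfmon.ne_zero
  set L := AlgebraicClosure E with hL
  haveI : CharP L p := charP_of_injective_algebraMap (algebraMap E L).injective p
  letI : Fintype E := Fintype.ofFinite E
  have hcardE : Fintype.card E = q := by
    have := GaloisField.card p r hr0
    rwa [Nat.card_eq_fintype_card, ← hq] at this
  set i : F →+* E := algebraMap F E with hi
  set j : E →+* L := algebraMap E L with hj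
  -- image of E in L equals the fixed points of x ↦ x ^ q
  have hEfix : ∀ e : E, e ^ q = e := fun e => by rw [← hcardE]; exact FiniteField.pow_card e
  have himg : ∀ x : L, x ^ q = x → ∃ e : E, j e = x := by
    intro x hx
    set g : L[X] := X ^ q - X with hg
    have h1 : (X : L[X]).natDegree < ((X : L[X]) ^ q).natDegree := by
      rw [natDegree_X_pow]; exact lt_of_le_of_lt natDegree_X_le (by omega)
    have hgdeg : g.natDegree = q := by
      rw [hg, natDegree_sub_eq_left_of_natDegree_lt h1, natDegree_X_pow]
    have hg0 : g ≠ 0 := fun h => by rw [h, natDegree_zero] at hgdeg; omega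
    have hsub : Finset.univ.image j ⊆ g.roots.toFinset := by
      intro z hz
      obtain ⟨e, -, rfl⟩ := Finset.mem_image.mp hz
      rw [Multiset.mem_toFinset, mem_roots hg0]
      simp only [hg, IsRoot, eval_sub, eval_pow, eval_X, sub_eq_zero]
      rw [← map_pow, hEfix e]
    have hcard1 : (Finset.univ.image j).card = q := by
      rw [Finset.card_image_of_injective _ j.injective, Finset.card_univ, hcardE]
    have hcard2 : g.roots.toFinset.card ≤ q :=
      (Multiset.toFinset_card_le _).trans ((card_roots' g).trans hgdeg.le)
    have heq : Finset.univ.image j = g.roots.toFinset :=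
      Finset.eq_of_subset_of_card_le hsub (by omega)
    have hxmem : x ∈ g.roots.toFinset := by
      rw [Multiset.mem_toFinset, mem_roots hg0]
      simp only [hg, IsRoot, eval_sub, eval_pow, eval_X, sub_eq_zero]
      exact hx
    rw [← heq] at hxmem
    obtain ⟨e, -, he⟩ := Finset.mem_image.mp hxmem
    exact ⟨e, he⟩
  -- every root of `f` in `L` is fixed by `x ↦ x ^ q`
  have hfixroot : ∀ x : L, eval x (f.map (j.comp i)) = 0 → x ^ q = x := by
    intro x hx
    have hdegquad : (X ^ 2 - C x * X + 1 : L[X]).degree ≠ 0 := by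
      have h2 : (X ^ 2 - C x * X + 1 : L[X]).degree = 2 := by compute_degree!
      rw [h2]; decide
    obtain ⟨t, ht⟩ := IsAlgClosed.exists_root (X ^ 2 - C x * X + 1 : L[X]) hdegquad
    have ht' : t ^ 2 - x * t + 1 = 0 := by
      simpa [IsRoot] using ht
    have ht0 : t ≠ 0 := by rintro rfl; simp at ht'
    have htinv : t * t⁻¹ = 1 := mul_inv_cancel₀ ht0
    have hxt : x = t + t⁻¹ := by
      linear_combination (-t⁻¹) * ht' + (t - x) * htinv
    have hmapf : f.map (j.comp i) = dickson 1 (1 : L) d := by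
      rw [hfdef, map_dickson, map_one]
    have heval : t ^ d + t⁻¹ ^ d = 0 := by
      rw [hmapf, hxt] at hx
      rw [← dickson_one_one_eval_add_inv t t⁻¹ htinv d]
      exact hx
    have ht2d : t ^ (2 * d) = -1 := by
      have h1' : t⁻¹ ^ d * t ^ d = 1 := by
        rw [← mul_pow, inv_mul_cancel₀ ht0, one_pow]
      have h2 : t ^ (2 * d) = t ^ d * t ^ d := by rw [two_mul, pow_add]
      rw [h2]
      linear_combination t ^ d * heval - h1'
    have htq1 : t ^ (q + 1) = 1 := by
      rw [← hd]
      have h4 : t ^ (4 * d) = (t ^ (2 * d)) ^ 2 := by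
        rw [← pow_mul]; ring_nf
      rw [h4, ht2d]; ring
    have htq : t ^ q = t⁻¹ :=
      eq_inv_of_mul_eq_one_left (by rw [← pow_succ]; exact htq1)
    rw [hxt, hq, add_pow_char_pow, ← hq, htq, inv_pow, htq, inv_inv]
    ring
  -- `f` splits over `E`
  have hsplitL : Splits (f.map (j.comp i)) := IsAlgClosed.splits _
  have hsplits : Splits (f.map i) := by
    apply Splits.of_splits_map j (by rw [Polynomial.map_map]; exact hsplitL)
    intro a ha
    rw [Polynomial.map_map] at ha
    obtain ⟨-, ha2⟩ := mem_roots'.mp ha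
    obtain ⟨e, he⟩ := himg a (hfixroot a ha2)
    exact ⟨e, he⟩
  -- a primitive (q+1)-st root of unity
  have hCharNe : ((q + 1 : ℕ) : L) ≠ 0 := by
    rw [Ne, CharP.cast_eq_zero_iff L p]; exact hpq1
  haveI : NeZero (((q + 1 : ℕ) : L)) := ⟨hCharNe⟩
  obtain ⟨ζ, hζ⟩ := HasEnoughRootsOfUnity.exists_primitiveRoot L (q + 1)
  have hζ0 : ζ ≠ 0 := hζ.ne_zero (by omega)
  have hζq1 : ζ ^ (q + 1) = 1 := hζ.pow_eq_one
  have hζinv : ζ * ζ⁻¹ = 1 := mul_inv_cancel₀ hζ0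
  have hζinv' : ζ⁻¹ * ζ = 1 := inv_mul_cancel₀ hζ0
  have h2d : ζ ^ (2 * d) = -1 := by
    have hsq : (ζ ^ (2 * d)) ^ 2 = 1 := by
      rw [← pow_mul, show 2 * d * 2 = 4 * d by ring, hd]; exact hζq1
    have hfac : (ζ ^ (2 * d) - 1) * (ζ ^ (2 * d) + 1) = 0 := by linear_combination hsq
    rcases mul_eq_zero.mp hfac with h | h
    · exfalso
      have h1 : ζ ^ (2 * d) = 1 := by linear_combination h
      have h2 := hζ.dvd_of_pow_eq_one _ h1
      have := Nat.le_of_dvd (by omega) h2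
      omega
    · linear_combination h
  set y : L := ζ + ζ⁻¹ with hydef
  have hζq : ζ ^ q = ζ⁻¹ :=
    eq_inv_of_mul_eq_one_left (by rw [← pow_succ]; exact hζq1)
  have hyq : y ^ q = y := by
    rw [hydef, hq, add_pow_char_pow, ← hq, hζq, inv_pow, hζq, inv_inv]
    ring
  obtain ⟨y', hy'⟩ := himg y hyq
  -- `y'` is a root of `f` in `E`
  have hevaly : eval y (f.map (j.comp i)) = 0 := by
    rw [hfdef, map_dickson, map_one, hydef, dickson_one_one_eval_add_inv ζ ζ⁻¹ hζinv d]
    have h2d' : ζ⁻¹ ^ (2 * d) = -1 := by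
      rw [inv_pow, h2d, inv_neg, inv_one]
    have ha2 : ζ ^ d * ζ ^ d = -1 := by
      rw [← pow_add, show d + d = 2 * d by ring]; exact h2d
    have hb2 : ζ⁻¹ ^ d * ζ⁻¹ ^ d = -1 := by
      rw [← pow_add, show d + d = 2 * d by ring]; exact h2d'
    have hab : ζ ^ d * ζ⁻¹ ^ d = 1 := by rw [← mul_pow, hζinv, one_pow]
    have hsq0 : (ζ ^ d + ζ⁻¹ ^ d) ^ 2 = 0 := by
      linear_combination ha2 + hb2 + 2 * hab
    exact (pow_eq_zero_iff (two_ne_zero)).mp hsq0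
  have hy'root : aeval y' f = 0 := by
    apply j.injective
    rw [map_zero, aeval_def, hom_eval₂, hy', ← eval_map]
    exact hevaly
  -- degree of the subfield generated by `y'`
  have hint : IsIntegral F y' := IsIntegral.of_finite F y'
  obtain ⟨s, hs⟩ : ∃ s, Module.finrank F F⟮y'⟯ = s := ⟨_, rfl⟩
  have hfr : Module.finrank F E = r := GaloisField.finrank p hr0
  have hs1 : 1 ≤ s := hs ▸ Module.finrank_pos
  have hsr : s ∣ r := by
    have hmul := Module.finrank_mul_finrank F F⟮y'⟯ E
    rw [hfr, hs] at hmul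
    exact ⟨_, hmul.symm⟩

  letI : Fintype F⟮y'⟯ := Fintype.ofFinite _
  have hcardFy : Fintype.card F⟮y'⟯ = p ^ s := by
    rw [Module.card_eq_pow_finrank (K := F) (V := F⟮y'⟯), ZMod.card, hs]
  have hy's : y' ^ p ^ s = y' := by
    have hgen := FiniteField.pow_card (IntermediateField.AdjoinSimple.gen F y')
    rw [hcardFy] at hgen
    have hc := congrArg (algebraMap F⟮y'⟯ E) hgen
    rwa [map_pow, IntermediateField.AdjoinSimple.algebraMap_gen] at hc
  have hys : y ^ p ^ s = y := by rw [← hy', ← map_pow, hy's]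
  -- Frobenius action on ζ
  have hζquad : ζ ^ 2 - y * ζ + 1 = 0 := by
    linear_combination -hζinv' - ζ * hydef
  have hfrob : (ζ ^ p ^ s) ^ 2 - y * (ζ ^ p ^ s) + 1 = 0 := by
    have hc := congrArg (iterateFrobenius L p s) hζquad
    simp only [map_add, map_sub, map_mul, map_one, map_pow, map_zero,
      iterateFrobenius_def] at hc
    rwa [hys] at hc
  have hcases : ζ ^ p ^ s = ζ ∨ ζ ^ p ^ s = ζ⁻¹ := by
    have hfac : (ζ ^ p ^ s - ζ) * (ζ ^ p ^ s - ζ⁻¹) = 0 := by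
      linear_combination hfrob + hζinv + ζ ^ p ^ s * hydef
    rcases mul_eq_zero.mp hfac with h | h
    · exact Or.inl (by linear_combination h)
    · exact Or.inr (by linear_combination h)
  have hζ2s : ζ ^ p ^ (2 * s) = ζ := by
    have hps2 : p ^ (2 * s) = p ^ s * p ^ s := by rw [two_mul, pow_add]
    rw [hps2, pow_mul]
    rcases hcases with h | h
    · rw [h, h]
    · rw [h, inv_pow, h, inv_inv]
  have hdvd : q + 1 ∣ p ^ (2 * s) - 1 := by
    apply hζ.dvd_of_pow_eq_one
    have h1p : 1 ≤ p ^ (2 * s) := Nat.one_le_pow _ _ hp.pos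
    have hmul : ζ ^ (p ^ (2 * s) - 1) * ζ = 1 * ζ := by
      rw [← pow_succ, Nat.sub_add_cancel h1p, one_mul]; exact hζ2s
    exact mul_right_cancel₀ hζ0 hmul
  -- conclude s = r
  have hseq : s = r := by
    by_contra hne
    obtain ⟨m, hm⟩ := hsr
    have hm2 : 2 ≤ m := by
      rcases Nat.lt_or_ge m 2 with h | h
      · interval_cases m <;> omega
      · exact h
    have h2s : 2 * s ≤ r := by
      calc 2 * s = s * 2 := by ring
        _ ≤ s * m := Nat.mul_le_mul_left s hm2
        _ = r := hm.symm
    have hple : p ^ (2 * s) ≤ p ^ r := Nat.pow_le_pow_right hp.pos h2s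
    have hge : 4 ≤ p ^ (2 * s) := by
      calc 4 = 2 ^ 2 := by norm_num
      _ ≤ p ^ 2 := Nat.pow_le_pow_left hp2 2
      _ ≤ p ^ (2 * s) := Nat.pow_le_pow_right hp.pos (by omega)
    have hle := Nat.le_of_dvd (by omega) hdvd
    have hqr : p ^ r = q := hq.symm
    omega
  -- conclusion
  have hyr : y' ∈ f.rootSet E := by
    rw [mem_rootSet]; exact ⟨hf0, hy'root⟩
  have hadj : Algebra.adjoin F {y'} = ⊤ := by
    have h1 : F⟮y'⟯.toSubalgebra = Algebra.adjoin F {y'} :=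
      IntermediateField.adjoin_simple_toSubalgebra_of_isAlgebraic hint.isAlgebraic
    have h2 : Subalgebra.toSubmodule F⟮y'⟯.toSubalgebra = ⊤ := by
      apply Submodule.eq_top_of_finrank_eq
      show Module.finrank F F⟮y'⟯ = Module.finrank F E
      rw [hs, hfr]; exact hseq
    rw [← h1]
    exact Algebra.toSubmodule_eq_top.mp h2
  refine ⟨hsplits, ?_⟩
  rw [eq_top_iff, ← hadj]
  exact Algebra.adjoin_mono (Set.singleton_subset_iff.mpr hyr)
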